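/- FID is bounded by the sum of the between-class and within-class FIDs in the commuting case: if for distributions R and G the between-class covariances Σ^R_B, Σ^G_B and all within-class covariances Σ^R_{W,c}, Σ^G_{W,c} form a commuting family of positive semidefinite matrices, then FID = ||μ^R − μ^G||² + Tr(Σ^R + Σ^G − 2(Σ^R Σ^G)^{1/2}) ≤ BCFID + WCFID, where Σ^E = Σ^E_B + Σ_c p(c) Σ^E_{W,c}, BCFID = ||μ^R − μ^G||² + Tr(Σ^R_B + Σ^G_B − 2(Σ^R_B Σ^G_B)^{1/2}), and WCFID = Σ_c p(c)[||μ^R_c − μ^G_c||² + Tr(Σ^R_{W,c} + Σ^G_{W,c} − 2(Σ^R_{W,c} Σ^G_{W,c})^{1/2})]. -/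

import Mathlib

open Matrix

set_option linter.unusedSectionVars false
set_option maxHeartbeats 1600000

/-- The positive semidefinite square root of a positive semidefinite matrix
(the definition removed from Mathlib, restored with its old meaning). -/
noncomputable def Matrix.PosSemidef.sqrt {n 𝕜 : Type*} [Fintype n] [RCLike 𝕜] [PartialOrder 𝕜] [DecidableEq n]
    {A : Matrix n n 𝕜} (hA : A.PosSemidef) : Matrix n n 𝕜 :=
  hA.1.eigenvectorUnitary.1 * Matrix.diagonal ((↑) ∘ Real.sqrt ∘ hA.1.eigenvalues) *
  (star hA.1.eigenvectorUnitary : Matrix n n 𝕜)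

open scoped MatrixOrder in
lemma Matrix.PosSemidef.sqrt_eq_cfcSqrt {m : Type*} [Fintype m] [DecidableEq m]
    {A : Matrix m m ℝ} (hA : A.PosSemidef) : hA.sqrt = CFC.sqrt A := by
  have h0 : (0 : Matrix m m ℝ) ≤ A := Matrix.nonneg_iff_posSemidef.mpr hA
  rw [CFC.sqrt_eq_real_sqrt A h0, cfcₙ_eq_cfc, Matrix.IsHermitian.cfc_eq hA.1]
  rfl

open scoped MatrixOrder in
lemma Matrix.PosSemidef.posSemidef_sqrt {m : Type*} [Fintype m] [DecidableEq m]
    {A : Matrix m m ℝ} (hA : A.PosSemidef) : hA.sqrt.PosSemidef := by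
  rw [hA.sqrt_eq_cfcSqrt]
  exact Matrix.nonneg_iff_posSemidef.mp (CFC.sqrt_nonneg A)

open scoped MatrixOrder in
lemma Matrix.PosSemidef.sqrt_mul_self {m : Type*} [Fintype m] [DecidableEq m]
    {A : Matrix m m ℝ} (hA : A.PosSemidef) : hA.sqrt * hA.sqrt = A := by
  rw [hA.sqrt_eq_cfcSqrt]
  exact CFC.sqrt_mul_sqrt_self A (Matrix.nonneg_iff_posSemidef.mpr hA)

open scoped MatrixOrder in
lemma Matrix.PosSemidef.eq_sqrt_of_sq_eq {m : Type*} [Fintype m] [DecidableEq m]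
    {A B : Matrix m m ℝ} (hB : B.PosSemidef) (hA : A.PosSemidef) (h : B ^ 2 = A) :
    B = hA.sqrt := by
  rw [hA.sqrt_eq_cfcSqrt]
  exact (CFC.sqrt_unique (by rw [← sq]; exact h) (Matrix.nonneg_iff_posSemidef.mpr hB)).symm

section Helpers
variable {m : Type*} [Fintype m] [DecidableEq m]

lemma myTraceNonneg {A : Matrix m m ℝ} (hA : A.PosSemidef) : 0 ≤ A.trace := by
  rw [Matrix.trace]
  refine Finset.sum_nonneg fun i _ => ?_
  exact hA.diag_nonneg

lemma mySmulPSD {A : Matrix m m ℝ} {r : ℝ} (hr : 0 ≤ r) (hA : A.PosSemidef) :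
    (r • A).PosSemidef := by
  refine ⟨?_, fun x => ?_⟩
  · show (r • A)ᴴ = r • A
    rw [Matrix.conjTranspose_smul, hA.1]
    simp
  · exact (hA.smul hr).2 x

-- diagonal commute transfer

lemma myDiagTransfer {d e : m → ℝ} (hde : ∀ i j, d i = d j → e i = e j)
    {B : Matrix m m ℝ} (h : Commute (Matrix.diagonal d) B) :
    Commute (Matrix.diagonal e) B := by
  have h' : ∀ i j, d i * B i j = B i j * d j := by
    intro i j
    have := congrFun (congrFun h.eq i) j
    simpa [Matrix.mul_apply, Matrix.diagonal, Finset.sum_ite_eq, Finset.sum_ite_eq'] using this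
  show _ = _
  ext i j
  simp only [Matrix.mul_apply, Matrix.diagonal, Matrix.of_apply, ite_mul, mul_ite, zero_mul,
    mul_zero, Finset.sum_ite_eq, Finset.sum_ite_eq', Finset.mem_univ, if_true]
  rcases eq_or_ne (d i) (d j) with hd | hd
  · rw [hde i j hd, mul_comm]
  · have : B i j = 0 := by
      have := h' i j
      rw [mul_comm (B i j) (d j)] at this
      have h2 : (d i - d j) * B i j = 0 := by ring_nf; linarith [this]
      rcases mul_eq_zero.mp h2 with h3 | h3
      · exact absurd (sub_eq_zero.mp h3) hd
      · exact h3
    simp [this]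

lemma myCommuteSqrt {A B : Matrix m m ℝ} (hA : A.PosSemidef) (h : Commute A B) :
    Commute hA.sqrt B := by
  set U : Matrix m m ℝ := (hA.1.eigenvectorUnitary : Matrix m m ℝ)
  have hU1 : U * star U = 1 := by
    exact (Matrix.mem_unitaryGroup_iff).mp hA.1.eigenvectorUnitary.2
  have hU2 : star U * U = 1 := by
    exact (Matrix.mem_unitaryGroup_iff').mp hA.1.eigenvectorUnitary.2
  have hdiag : star U * A * U = Matrix.diagonal (RCLike.ofReal ∘ hA.1.eigenvalues) :=
    by simpa using hA.1.conjStarAlgAut_star_eigenvectorUnitary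
  have hD : Commute (Matrix.diagonal (RCLike.ofReal ∘ hA.1.eigenvalues)) (star U * B * U) := by
    rw [← hdiag]
    show star U * A * U * (star U * B * U) = star U * B * U * (star U * A * U)
    calc star U * A * U * (star U * B * U) = star U * (A * (U * star U) * B) * U := by
          simp only [Matrix.mul_assoc]
      _ = star U * (A * B) * U := by rw [hU1]; simp only [Matrix.mul_one]
      _ = star U * (B * A) * U := by rw [h.eq]
      _ = star U * (B * (U * star U) * A) * U := by rw [hU1]; simp only [Matrix.mul_one]
      _ = star U * B * U * (star U * A * U) := by simp only [Matrix.mul_assoc]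
  have hE : Commute (Matrix.diagonal (RCLike.ofReal ∘ Real.sqrt ∘ hA.1.eigenvalues))
      (star U * B * U) := by
    refine myDiagTransfer (fun i j hij => ?_) hD
    simp only [Function.comp_apply] at hij ⊢
    norm_cast at hij ⊢
    rw [hij]
  have hsq : hA.sqrt = U * Matrix.diagonal ((RCLike.ofReal : ℝ → ℝ) ∘ Real.sqrt ∘ hA.1.eigenvalues) * star U := rfl
  rw [Commute, SemiconjBy, hsq]
  set E := Matrix.diagonal ((RCLike.ofReal : ℝ → ℝ) ∘ Real.sqrt ∘ hA.1.eigenvalues)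
  have hE' := hE.eq
  calc U * E * star U * B = U * E * star U * (B * (U * star U)) := by rw [hU1, Matrix.mul_one]
    _ = U * (E * (star U * B * U)) * star U := by simp only [Matrix.mul_assoc]
    _ = U * ((star U * B * U) * E) * star U := by rw [hE']
    _ = (U * star U) * (B * (U * E * star U)) := by simp only [Matrix.mul_assoc]
    _ = B * (U * E * star U) := by rw [hU1, Matrix.one_mul]

lemma myMulPSD {A B : Matrix m m ℝ} (hA : A.PosSemidef) (hB : B.PosSemidef)
    (h : Commute A B) : (A * B).PosSemidef := by
  have h1 : Commute hA.sqrt B := myCommuteSqrt hA h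
  have key : A * B = hA.sqrt * B * hA.sqrtᴴ := by
    rw [hA.posSemidef_sqrt.1]
    calc A * B = hA.sqrt * hA.sqrt * B := by rw [hA.sqrt_mul_self]
      _ = hA.sqrt * (hA.sqrt * B) := by rw [Matrix.mul_assoc]
      _ = hA.sqrt * (B * hA.sqrt) := by rw [h1.eq]
      _ = hA.sqrt * B * hA.sqrt := by rw [Matrix.mul_assoc]
  rw [key]
  exact hB.mul_mul_conjTranspose_same hA.sqrt

-- sqrt of product

lemma mySqrtMul {A B : Matrix m m ℝ} (hA : A.PosSemidef) (hB : B.PosSemidef)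
    (h : Commute A B) (hAB : (A * B).PosSemidef) : hAB.sqrt = hA.sqrt * hB.sqrt := by
  have h1 : Commute hA.sqrt B := myCommuteSqrt hA h
  have h2 : Commute hB.sqrt hA.sqrt := myCommuteSqrt hB h1.symm
  have hP : (hA.sqrt * hB.sqrt).PosSemidef :=
    myMulPSD hA.posSemidef_sqrt hB.posSemidef_sqrt h2.symm
  refine ((hP.eq_sqrt_of_sq_eq hAB ?_)).symm
  rw [pow_two]
  calc hA.sqrt * hB.sqrt * (hA.sqrt * hB.sqrt)
      = hA.sqrt * (hB.sqrt * hA.sqrt) * hB.sqrt := by simp only [Matrix.mul_assoc]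
    _ = hA.sqrt * (hA.sqrt * hB.sqrt) * hB.sqrt := by rw [h2.eq]
    _ = (hA.sqrt * hA.sqrt) * (hB.sqrt * hB.sqrt) := by simp only [Matrix.mul_assoc]
    _ = A * B := by rw [hA.sqrt_mul_self, hB.sqrt_mul_self]

lemma myCommuteInv {A B : Matrix m m ℝ} (h : Commute A B) (hB : IsUnit B.det) :
    Commute A B⁻¹ := by
  show A * B⁻¹ = B⁻¹ * A
  calc A * B⁻¹ = B⁻¹ * (B * A) * B⁻¹ := by
        rw [← Matrix.mul_assoc, Matrix.nonsing_inv_mul _ hB, Matrix.one_mul]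
    _ = B⁻¹ * (A * B) * B⁻¹ := by rw [h.eq]
    _ = B⁻¹ * A * (B * B⁻¹) := by simp only [Matrix.mul_assoc]
    _ = B⁻¹ * A := by rw [Matrix.mul_nonsing_inv _ hB, Matrix.mul_one]

lemma myTraceLe {X Y : Matrix m m ℝ} (hX : X.PosSemidef) (hY : Y.PosSemidef)
    (hc : Commute X Y) (h : (Y * Y - X * X).PosSemidef) : X.trace ≤ Y.trace := by
  rw [← sub_nonneg, ← Matrix.trace_sub]
  have key : ∀ ε : ℝ, 0 < ε → -(ε * (Fintype.card m : ℝ)) ≤ (Y - X).trace := by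
    intro ε hε
    have hone : (ε • (1 : Matrix m m ℝ)).PosDef := by
      rw [Matrix.smul_one_eq_diagonal]
      exact Matrix.PosDef.diagonal (fun _ => hε)
    set Sε := X + Y + ε • (1 : Matrix m m ℝ) with hSdef
    have hSε : Sε.PosDef := Matrix.PosDef.posSemidef_add (hX.add hY) hone
    have hudet : IsUnit Sε.det := (Matrix.isUnit_iff_isUnit_det _).mp hSε.isUnit
    set K := Sε⁻¹ with hKdef
    have hK : K.PosSemidef := hSε.inv.posSemidef
    have hXS : Commute X Sε := ((Commute.refl X).add_right hc).add_right
      ((Commute.one_right X).smul_right ε)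
    have hYS : Commute Y Sε := (hc.symm.add_right (Commute.refl Y)).add_right
      ((Commute.one_right Y).smul_right ε)
    have hXK : Commute X K := myCommuteInv hXS hudet
    have hYK : Commute Y K := myCommuteInv hYS hudet
    have hSK : Sε * K = 1 := Matrix.mul_nonsing_inv _ hudet
    have expand : (Y - X) * Sε = (Y * Y - X * X) + ε • (Y - X) := by
      rw [hSdef]
      rw [Matrix.sub_mul, Matrix.mul_add, Matrix.mul_add, Matrix.mul_add, Matrix.mul_add]
      rw [hc.eq]
      simp only [Matrix.mul_smul, Matrix.mul_one]
      rw [smul_sub]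
      abel
    have h1 : (Y - X).trace = ((Y * Y - X * X) * K).trace + ε * ((Y - X) * K).trace := by
      have : (Y - X).trace = ((Y - X) * Sε * K).trace := by
        rw [Matrix.mul_assoc, hSK, Matrix.mul_one]
      rw [this, expand, Matrix.add_mul, Matrix.trace_add, Matrix.smul_mul, Matrix.trace_smul]
      simp
    have hterm1 : 0 ≤ ((Y * Y - X * X) * K).trace := by
      refine myTraceNonneg (myMulPSD h hK ?_)
      exact ((hYK.mul_left hYK).sub_left (hXK.mul_left hXK))
    have hXKle : (X * K).trace ≤ (Fintype.card m : ℝ) := by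
      have hsub : (Sε - X).PosSemidef := by
        have : Sε - X = Y + ε • 1 := by rw [hSdef]; abel
        rw [this]
        exact hY.add (mySmulPSD hε.le (Matrix.PosSemidef.one))
      have h2 : 0 ≤ ((Sε - X) * K).trace := by
        refine myTraceNonneg (myMulPSD hsub hK ?_)
        exact (myCommuteInv (Commute.refl Sε) hudet).sub_left hXK
      rw [Matrix.sub_mul, Matrix.trace_sub, hSK, Matrix.trace_one, sub_nonneg] at h2
      exact h2
    have hYK0 : 0 ≤ (Y * K).trace := myTraceNonneg (myMulPSD hY hK hYK)
    have hterm2 : -(Fintype.card m : ℝ) ≤ ((Y - X) * K).trace := by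
      rw [Matrix.sub_mul, Matrix.trace_sub]
      linarith
    calc -(ε * (Fintype.card m : ℝ)) ≤ 0 + ε * ((Y - X) * K).trace := by nlinarith
      _ ≤ ((Y * Y - X * X) * K).trace + ε * ((Y - X) * K).trace := by linarith
      _ = (Y - X).trace := h1.symm
  by_contra hlt
  push_neg at hlt
  set t := (Y - X).trace with ht
  have hc0 : (0 : ℝ) ≤ (Fintype.card m : ℝ) := Nat.cast_nonneg _
  have hmt : 0 < -t := by linarith
  have hε : 0 < -t / ((Fintype.card m : ℝ) + 1) := div_pos hmt (by linarith)
  have h2 := key _ hε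
  have h3 : ((Fintype.card m : ℝ) + 1) > 0 := by linarith
  rw [neg_div, neg_mul, neg_neg, div_mul_eq_mul_div] at h2
  rw [div_le_iff₀ h3] at h2
  nlinarith

lemma myKeyIdentity {a b c d : Matrix m m ℝ}
    (hab : Commute a b) (hac : Commute a c) (had : Commute a d)
    (hbc : Commute b c) (hbd : Commute b d) (hcd : Commute c d) :
    (a * a + c * c) * (b * b + d * d) - (a * b + c * d) * (a * b + c * d)
      = (a * d - c * b) * (a * d - c * b) := by
  let S : Subring (Matrix m m ℝ) := Subring.closure {a, b, c, d}
  letI : CommRing S := Subring.closureCommRingOfComm (by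
    intro x hx y hy
    simp only [Set.mem_insert_iff, Set.mem_singleton_iff] at hx hy
    rcases hx with rfl | rfl | rfl | rfl <;> rcases hy with rfl | rfl | rfl | rfl <;>
      first
        | rfl
        | exact hab.eq | exact hac.eq | exact had.eq | exact hbc.eq | exact hbd.eq
        | exact hcd.eq | exact hab.symm.eq | exact hac.symm.eq | exact had.symm.eq
        | exact hbc.symm.eq | exact hbd.symm.eq | exact hcd.symm.eq)
  have ha : a ∈ S := Subring.subset_closure (by simp)
  have hb : b ∈ S := Subring.subset_closure (by simp)
  have hc : c ∈ S := Subring.subset_closure (by simp)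
  have hd : d ∈ S := Subring.subset_closure (by simp)
  have key : ((⟨a, ha⟩ : S) * ⟨a, ha⟩ + ⟨c, hc⟩ * ⟨c, hc⟩) * (⟨b, hb⟩ * ⟨b, hb⟩ + ⟨d, hd⟩ * ⟨d, hd⟩)
      - (⟨a, ha⟩ * ⟨b, hb⟩ + ⟨c, hc⟩ * ⟨d, hd⟩) * (⟨a, ha⟩ * ⟨b, hb⟩ + ⟨c, hc⟩ * ⟨d, hd⟩)
      = ((⟨a, ha⟩ : S) * ⟨d, hd⟩ - ⟨c, hc⟩ * ⟨b, hb⟩) * (⟨a, ha⟩ * ⟨d, hd⟩ - ⟨c, hc⟩ * ⟨b, hb⟩) := by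
    ring
  have := congrArg (Subtype.val) key
  simpa using this

open Classical in
noncomputable def psqrt (A : Matrix m m ℝ) : Matrix m m ℝ :=
  if h : A.PosSemidef then h.sqrt else 0

lemma psqrt_eq {A : Matrix m m ℝ} (hA : A.PosSemidef) : psqrt A = hA.sqrt := by
  rw [psqrt, dif_pos hA]

lemma psqrt_psd {A : Matrix m m ℝ} (hA : A.PosSemidef) : (psqrt A).PosSemidef := by
  rw [psqrt_eq hA]; exact hA.posSemidef_sqrt

lemma psqrt_mul_self {A : Matrix m m ℝ} (hA : A.PosSemidef) : psqrt A * psqrt A = A := by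
  rw [psqrt_eq hA]; exact hA.sqrt_mul_self

lemma commute_psqrt_left {A B : Matrix m m ℝ} (hA : A.PosSemidef) (h : Commute A B) :
    Commute (psqrt A) B := by
  rw [psqrt_eq hA]; exact myCommuteSqrt hA h

lemma commute_psqrt_psqrt {A B : Matrix m m ℝ} (hA : A.PosSemidef) (hB : B.PosSemidef)
    (h : Commute A B) : Commute (psqrt A) (psqrt B) :=
  commute_psqrt_left hA ((commute_psqrt_left hB h.symm).symm)

lemma psqrt_hermitian {A : Matrix m m ℝ} (hA : A.PosSemidef) : (psqrt A)ᴴ = psqrt A := by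
  rw [psqrt_eq hA]; exact hA.posSemidef_sqrt.1

lemma myTwoTerm {A B A' B' : Matrix m m ℝ}
    (hA : A.PosSemidef) (hB : B.PosSemidef) (hA' : A'.PosSemidef) (hB' : B'.PosSemidef)
    (hAB : Commute A B) (hAA' : Commute A A') (hAB' : Commute A B')
    (hA'B : Commute A' B) (hBB' : Commute B B') (hA'B' : Commute A' B') :
    (psqrt A * psqrt B).trace + (psqrt A' * psqrt B').trace
      ≤ (psqrt (A + A') * psqrt (B + B')).trace := by
  set a := psqrt A; set b := psqrt B; set c := psqrt A'; set d := psqrt B'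
  have hS : (A + A').PosSemidef := hA.add hA'
  have hT : (B + B').PosSemidef := hB.add hB'
  have hST : Commute (A + A') (B + B') :=
    (hAB.add_right hAB').add_left (hA'B.add_right hA'B')
  -- commutes among sqrts
  have cab : Commute a b := commute_psqrt_psqrt hA hB hAB
  have cac : Commute a c := commute_psqrt_psqrt hA hA' hAA'
  have cad : Commute a d := commute_psqrt_psqrt hA hB' hAB'
  have cbc : Commute b c := (commute_psqrt_psqrt hA' hB hA'B).symm
  have cbd : Commute b d := commute_psqrt_psqrt hB hB' hBB'
  have ccd : Commute c d := commute_psqrt_psqrt hA' hB' hA'B'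
  set X := a * b + c * d with hXdef
  set Y := psqrt (A + A') * psqrt (B + B') with hYdef
  have hapsd := psqrt_psd hA
  have hbpsd := psqrt_psd hB
  have hcpsd := psqrt_psd hA'
  have hdpsd := psqrt_psd hB'
  have hXpsd : X.PosSemidef := (myMulPSD hapsd hbpsd cab).add (myMulPSD hcpsd hdpsd ccd)
  have hYpsd : Y.PosSemidef :=
    myMulPSD (psqrt_psd hS) (psqrt_psd hT) (commute_psqrt_psqrt hS hT hST)
  -- Commute X Y
  have ca : Commute a Y := (commute_psqrt_psqrt hA hS ((Commute.refl A).add_right hAA')).mul_right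
    (commute_psqrt_psqrt hA hT (hAB.add_right hAB'))
  have cb : Commute b Y := (commute_psqrt_psqrt hB hS (hAB.symm.add_right hA'B.symm)).mul_right
    (commute_psqrt_psqrt hB hT ((Commute.refl B).add_right hBB'))
  have cc : Commute c Y := (commute_psqrt_psqrt hA' hS (hAA'.symm.add_right (Commute.refl A'))).mul_right
    (commute_psqrt_psqrt hA' hT (hA'B.add_right hA'B'))
  have cd : Commute d Y := (commute_psqrt_psqrt hB' hS (hAB'.symm.add_right hA'B'.symm)).mul_right
    (commute_psqrt_psqrt hB' hT (hBB'.symm.add_right (Commute.refl B')))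
  have hcXY : Commute X Y := (ca.mul_left cb).add_left (cc.mul_left cd)
  have hYY : Y * Y = (A + A') * (B + B') := by
    have cst := commute_psqrt_psqrt hS hT hST
    calc psqrt (A + A') * psqrt (B + B') * (psqrt (A + A') * psqrt (B + B'))
        = psqrt (A + A') * (psqrt (B + B') * psqrt (A + A')) * psqrt (B + B') := by
          simp only [Matrix.mul_assoc]
      _ = psqrt (A + A') * (psqrt (A + A') * psqrt (B + B')) * psqrt (B + B') := by rw [cst.eq]
      _ = (psqrt (A + A') * psqrt (A + A')) * (psqrt (B + B') * psqrt (B + B')) := by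
          simp only [Matrix.mul_assoc]
      _ = (A + A') * (B + B') := by rw [psqrt_mul_self hS, psqrt_mul_self hT]
  have hdiff : Y * Y - X * X = (a * d - c * b) * (a * d - c * b) := by
    rw [hYY, hXdef]
    have key := myKeyIdentity cab cac cad cbc cbd ccd
    rw [psqrt_mul_self hA, psqrt_mul_self hB, psqrt_mul_self hA', psqrt_mul_self hB'] at key
    exact key
  have hherm : (a * d - c * b)ᴴ = a * d - c * b := by
    rw [Matrix.conjTranspose_sub, Matrix.conjTranspose_mul, Matrix.conjTranspose_mul,
      psqrt_hermitian hA, psqrt_hermitian hB, psqrt_hermitian hA', psqrt_hermitian hB',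
      ← cad.eq, ← cbc.eq]
  have hpsd2 : (Y * Y - X * X).PosSemidef := by
    have h2 := Matrix.posSemidef_conjTranspose_mul_self (a * d - c * b)
    rw [hherm] at h2
    rw [hdiff]
    exact h2
  have hfin := myTraceLe hXpsd hYpsd hcXY hpsd2
  rwa [hXdef, Matrix.trace_add] at hfin

lemma myPsdSum {ι : Type*} (s : Finset ι) (f : ι → Matrix m m ℝ)
    (h : ∀ i, (f i).PosSemidef) : (∑ i ∈ s, f i).PosSemidef := by
  classical
  induction s using Finset.induction_on with
  | empty => simpa using Matrix.PosSemidef.zero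
  | insert a s ha ih => rw [Finset.sum_insert ha]; exact (h _).add ih

lemma psqrt_zero : psqrt (0 : Matrix m m ℝ) = 0 := by
  have h0 : (0 : Matrix m m ℝ).PosSemidef := Matrix.PosSemidef.zero
  rw [psqrt_eq h0]
  exact (h0.eq_sqrt_of_sq_eq h0 (by simp)).symm

lemma psqrt_smul {A : Matrix m m ℝ} (hA : A.PosSemidef) {r : ℝ} (hr : 0 ≤ r) :
    psqrt (r • A) = Real.sqrt r • psqrt A := by
  have h1 : (r • A).PosSemidef := mySmulPSD hr hA
  have h2 : (Real.sqrt r • psqrt A).PosSemidef := mySmulPSD (Real.sqrt_nonneg r) (psqrt_psd hA)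
  rw [psqrt_eq h1]
  refine (h2.eq_sqrt_of_sq_eq h1 ?_).symm
  rw [pow_two, Matrix.smul_mul, Matrix.mul_smul, smul_smul, Real.mul_self_sqrt hr,
    psqrt_mul_self hA]

lemma psqrt_mul {A B : Matrix m m ℝ} (hA : A.PosSemidef) (hB : B.PosSemidef)
    (h : Commute A B) (hAB : (A * B).PosSemidef) : psqrt (A * B) = psqrt A * psqrt B := by
  have hc := commute_psqrt_psqrt hA hB h
  have hP : (psqrt A * psqrt B).PosSemidef := myMulPSD (psqrt_psd hA) (psqrt_psd hB) hc
  rw [psqrt_eq hAB]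
  refine (hP.eq_sqrt_of_sq_eq hAB ?_).symm
  rw [pow_two]
  calc psqrt A * psqrt B * (psqrt A * psqrt B)
      = psqrt A * (psqrt B * psqrt A) * psqrt B := by simp only [Matrix.mul_assoc]
    _ = psqrt A * (psqrt A * psqrt B) * psqrt B := by rw [hc.eq]
    _ = (psqrt A * psqrt A) * (psqrt B * psqrt B) := by simp only [Matrix.mul_assoc]
    _ = A * B := by rw [psqrt_mul_self hA, psqrt_mul_self hB]

lemma mySuper {ι : Type*} (s : Finset ι) (f g : ι → Matrix m m ℝ)
    (hf : ∀ i, (f i).PosSemidef) (hg : ∀ i, (g i).PosSemidef)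
    (hff : ∀ i j, Commute (f i) (f j)) (hfg : ∀ i j, Commute (f i) (g j))
    (hgg : ∀ i j, Commute (g i) (g j)) :
    ∑ i ∈ s, (psqrt (f i) * psqrt (g i)).trace
      ≤ (psqrt (∑ i ∈ s, f i) * psqrt (∑ i ∈ s, g i)).trace := by
  classical
  induction s using Finset.induction_on with
  | empty => simp [psqrt_zero]
  | @insert a s ha ih =>
    rw [Finset.sum_insert ha, Finset.sum_insert ha, Finset.sum_insert ha]
    have step := myTwoTerm (hf a) (hg a) (myPsdSum s f hf) (myPsdSum s g hg)
      (hfg a a)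
      (Commute.sum_right s f (f a) (fun j _ => hff a j))
      (Commute.sum_right s g (f a) (fun j _ => hfg a j))
      (Commute.sum_left s f (g a) (fun j _ => (hfg j a)))
      (Commute.sum_right s g (g a) (fun j _ => hgg a j))
      (Commute.sum_left s f (∑ i ∈ s, g i) (fun j _ =>
        Commute.sum_right s g (f j) (fun k _ => hfg j k)))
    exact le_trans (add_le_add (le_refl _) ih) step

end Helpers

/-- `FID ≤ BCFID + WCFID` in the commuting case. For two distributions
`R`, `G` with class weights `p`, class means `muR c`, `muG c` (overall means
`Σ_c p c • muR c`, `Σ_c p c • muG c`), within-class covariances `SWR c`, `SWG c` and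
between-class covariances `SBR`, `SBG` forming a commuting family of PSD matrices, and
total covariances `Σ^E = Σ^E_B + Σ_c p(c) Σ^E_{W,c}` (law of total covariance):
`‖μ^R - μ^G‖² + Tr(Σ^R + Σ^G - 2(Σ^R Σ^G)^{1/2}) ≤ BCFID + WCFID`. -/
theorem fid_le_bcfid_add_wcfid
    {n : ℕ} {C : Type*} [Fintype C]
    (p : C → ℝ) (hp0 : ∀ c, 0 ≤ p c) (hp1 : ∑ c, p c = 1)
    (muR muG : C → Fin n → ℝ)
    (SWR SWG : C → Matrix (Fin n) (Fin n) ℝ) (SBR SBG : Matrix (Fin n) (Fin n) ℝ)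
    (hWR : ∀ c, (SWR c).PosSemidef) (hWG : ∀ c, (SWG c).PosSemidef)
    (hBR : SBR.PosSemidef) (hBG : SBG.PosSemidef)
    (hcomm : ∀ M ∈ Set.range SWR ∪ Set.range SWG ∪ {SBR, SBG},
      ∀ N ∈ Set.range SWR ∪ Set.range SWG ∪ {SBR, SBG}, Commute M N)
    (hPT : ((SBR + ∑ c, p c • SWR c) * (SBG + ∑ c, p c • SWG c)).PosSemidef)
    (hPB : (SBR * SBG).PosSemidef)
    (hPW : ∀ c, (SWR c * SWG c).PosSemidef) :
    (∑ i, ((∑ c, p c • muR c) i - (∑ c, p c • muG c) i) ^ 2)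
      + Matrix.trace ((SBR + ∑ c, p c • SWR c) + (SBG + ∑ c, p c • SWG c)
          - (2 : ℝ) • hPT.sqrt)
    ≤ ((∑ i, ((∑ c, p c • muR c) i - (∑ c, p c • muG c) i) ^ 2)
        + Matrix.trace (SBR + SBG - (2 : ℝ) • hPB.sqrt))
      + ∑ c, p c * ((∑ i, (muR c i - muG c i) ^ 2)
        + Matrix.trace (SWR c + SWG c - (2 : ℝ) • (hPW c).sqrt)) := by
  classical
  -- memberships
  set Fam : Set (Matrix (Fin n) (Fin n) ℝ) := Set.range SWR ∪ Set.range SWG ∪ {SBR, SBG}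
    with hFam
  have mBR : SBR ∈ Fam := Or.inr (Set.mem_insert _ _)
  have mBG : SBG ∈ Fam := Or.inr (Set.mem_insert_of_mem _ rfl)
  have mWR : ∀ c, SWR c ∈ Fam := fun c => Or.inl (Or.inl ⟨c, rfl⟩)
  have mWG : ∀ c, SWG c ∈ Fam := fun c => Or.inl (Or.inr ⟨c, rfl⟩)
  -- base commutes
  have cBRBG : Commute SBR SBG := hcomm _ mBR _ mBG
  have cBRWR : ∀ c, Commute SBR (SWR c) := fun c => hcomm _ mBR _ (mWR c)
  have cBRWG : ∀ c, Commute SBR (SWG c) := fun c => hcomm _ mBR _ (mWG c)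
  have cBGWR : ∀ c, Commute SBG (SWR c) := fun c => hcomm _ mBG _ (mWR c)
  have cBGWG : ∀ c, Commute SBG (SWG c) := fun c => hcomm _ mBG _ (mWG c)
  have cWRWR : ∀ c c', Commute (SWR c) (SWR c') := fun c c' => hcomm _ (mWR c) _ (mWR c')
  have cWRWG : ∀ c c', Commute (SWR c) (SWG c') := fun c c' => hcomm _ (mWR c) _ (mWG c')
  have cWGWG : ∀ c c', Commute (SWG c) (SWG c') := fun c c' => hcomm _ (mWG c) _ (mWG c')
  -- families over Option C
  set F : Option C → Matrix (Fin n) (Fin n) ℝ :=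
    fun o => o.elim SBR (fun c => p c • SWR c) with hF
  set G : Option C → Matrix (Fin n) (Fin n) ℝ :=
    fun o => o.elim SBG (fun c => p c • SWG c) with hG
  have hFpsd : ∀ o, (F o).PosSemidef := by
    rintro (_ | c)
    · exact hBR
    · exact mySmulPSD (hp0 c) (hWR c)
  have hGpsd : ∀ o, (G o).PosSemidef := by
    rintro (_ | c)
    · exact hBG
    · exact mySmulPSD (hp0 c) (hWG c)
  have hFF : ∀ o o', Commute (F o) (F o') := by
    rintro (_ | c) (_ | c')
    · exact Commute.refl SBR
    · exact (cBRWR c').smul_right _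
    · exact ((cBRWR c).symm).smul_left _
    · exact ((cWRWR c c').smul_left _).smul_right _
  have hFG : ∀ o o', Commute (F o) (G o') := by
    rintro (_ | c) (_ | c')
    · exact cBRBG
    · exact (cBRWG c').smul_right _
    · exact ((cBGWR c).symm).smul_left _
    · exact ((cWRWG c c').smul_left _).smul_right _
  have hGG : ∀ o o', Commute (G o) (G o') := by
    rintro (_ | c) (_ | c')
    · exact Commute.refl SBG
    · exact (cBGWG c').smul_right _
    · exact ((cBGWG c).symm).smul_left _
    · exact ((cWGWG c c').smul_left _).smul_right _
  have hsumF : ∑ o : Option C, F o = SBR + ∑ c, p c • SWR c := Fintype.sum_option F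
  have hsumG : ∑ o : Option C, G o = SBG + ∑ c, p c • SWG c := Fintype.sum_option G
  -- superadditivity
  have Hsuper := mySuper Finset.univ F G hFpsd hGpsd hFF hFG hGG
  rw [Fintype.sum_option F, Fintype.sum_option G,
    Fintype.sum_option (fun o => (psqrt (F o) * psqrt (G o)).trace)] at Hsuper
  have hterm : ∀ c, (psqrt (F (some c)) * psqrt (G (some c))).trace
      = p c * ((psqrt (SWR c) * psqrt (SWG c)).trace) := by
    intro c
    show (psqrt (p c • SWR c) * psqrt (p c • SWG c)).trace = _
    rw [psqrt_smul (hWR c) (hp0 c), psqrt_smul (hWG c) (hp0 c), Matrix.smul_mul,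
      Matrix.mul_smul, smul_smul, Real.mul_self_sqrt (hp0 c), Matrix.trace_smul, smul_eq_mul]
  have hFnone : F none = SBR := rfl
  have hGnone : G none = SBG := rfl
  have hFsome : ∀ c, F (some c) = p c • SWR c := fun _ => rfl
  have hGsome : ∀ c, G (some c) = p c • SWG c := fun _ => rfl
  rw [hFnone, hGnone] at Hsuper
  simp only [hterm] at Hsuper
  simp only [hFsome, hGsome] at Hsuper
  -- Hsuper : (psqrt SBR * psqrt SBG).trace + ∑ c, p c * (psqrt (SWR c) * psqrt (SWG c)).trace
  --   ≤ (psqrt (SBR + ∑ ...) * psqrt (SBG + ∑ ...)).trace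
  have hSRpsd : (SBR + ∑ c, p c • SWR c).PosSemidef := by
    rw [← hsumF]; exact myPsdSum _ F hFpsd
  have hSGpsd : (SBG + ∑ c, p c • SWG c).PosSemidef := by
    rw [← hsumG]; exact myPsdSum _ G hGpsd
  have cSRSG : Commute (SBR + ∑ c, p c • SWR c) (SBG + ∑ c, p c • SWG c) := by
    rw [← hsumF, ← hsumG]
    exact Commute.sum_left _ _ _ (fun j _ => Commute.sum_right _ _ _ (fun k _ => hFG j k))
  have eqT : Matrix.trace hPT.sqrt
      = (psqrt (SBR + ∑ c, p c • SWR c) * psqrt (SBG + ∑ c, p c • SWG c)).trace := by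
    rw [← psqrt_eq hPT, psqrt_mul hSRpsd hSGpsd cSRSG hPT]
  have eqB : Matrix.trace hPB.sqrt = (psqrt SBR * psqrt SBG).trace := by
    rw [← psqrt_eq hPB, psqrt_mul hBR hBG cBRBG hPB]
  have eqWsum : ∑ c, p c * Matrix.trace ((hPW c).sqrt)
      = ∑ c, p c * (psqrt (SWR c) * psqrt (SWG c)).trace := by
    refine Finset.sum_congr rfl fun c _ => ?_
    rw [← psqrt_eq (hPW c), psqrt_mul (hWR c) (hWG c) (cWRWG c c) (hPW c)]
  have Hmean : 0 ≤ ∑ c, p c * (∑ i, (muR c i - muG c i) ^ 2) :=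
    Finset.sum_nonneg fun c _ => mul_nonneg (hp0 c)
      (Finset.sum_nonneg fun i _ => sq_nonneg _)
  -- trace expansions
  have hLTrace : Matrix.trace ((SBR + ∑ c, p c • SWR c) + (SBG + ∑ c, p c • SWG c)
        - (2 : ℝ) • hPT.sqrt)
      = Matrix.trace SBR + ∑ c, p c * Matrix.trace (SWR c)
        + (Matrix.trace SBG + ∑ c, p c * Matrix.trace (SWG c))
        - 2 * Matrix.trace hPT.sqrt := by
    rw [Matrix.trace_sub, Matrix.trace_add, Matrix.trace_add, Matrix.trace_add,
      Matrix.trace_smul, Matrix.trace_sum, Matrix.trace_sum, smul_eq_mul]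
    simp only [Matrix.trace_smul, smul_eq_mul]
  have hBTrace : Matrix.trace (SBR + SBG - (2 : ℝ) • hPB.sqrt)
      = Matrix.trace SBR + Matrix.trace SBG - 2 * Matrix.trace hPB.sqrt := by
    rw [Matrix.trace_sub, Matrix.trace_add, Matrix.trace_smul, smul_eq_mul]
  have hRHSsum : ∑ c, p c * ((∑ i, (muR c i - muG c i) ^ 2)
        + Matrix.trace (SWR c + SWG c - (2 : ℝ) • (hPW c).sqrt))
      = ∑ c, p c * (∑ i, (muR c i - muG c i) ^ 2) + ∑ c, p c * Matrix.trace (SWR c)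
        + ∑ c, p c * Matrix.trace (SWG c) - 2 * ∑ c, p c * Matrix.trace ((hPW c).sqrt) := by
    calc ∑ c, p c * ((∑ i, (muR c i - muG c i) ^ 2)
          + Matrix.trace (SWR c + SWG c - (2 : ℝ) • (hPW c).sqrt))
        = ∑ c, (p c * (∑ i, (muR c i - muG c i) ^ 2) + p c * Matrix.trace (SWR c)
            + p c * Matrix.trace (SWG c) - 2 * (p c * Matrix.trace ((hPW c).sqrt))) := by
          refine Finset.sum_congr rfl fun c _ => ?_
          rw [Matrix.trace_sub, Matrix.trace_add, Matrix.trace_smul, smul_eq_mul]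
          ring
      _ = _ := by
          rw [Finset.sum_sub_distrib, Finset.sum_add_distrib, Finset.sum_add_distrib,
            ← Finset.mul_sum]
  rw [hLTrace, hBTrace, hRHSsum]
  linarith [Hsuper, Hmean, eqT, eqB, eqWsum]
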